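/- Let f : ℝ^d → ℝ be (H0,H1)-smooth with H0, H1 > 0, convex, and attain its minimum f* at x*. Run GD with warm-up step size η_k = θ·min{1/H0, 1/(3H1·F_k)}, F_k := f(x^k) − f*, with θ = 1/(4√2 + 4), for N iterations, and let R = ‖x^0 − x*‖. Let T be the smallest index k ∈ {0,…,N−1} with F_k < H0/(3H1), with T = N if no such index exists. If T < N, then f(x^N) − f* ≤ min{ (1 − θ/(6·H1·R²))^T · F_0 , 2·H0·R²/(θ·(N−T)) }; if T = N, then f(x^N) − f* ≤ (1 − θ/(6·H1·R²))^N · F_0. -/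

import Mathlib

open scoped RealInnerProductSpace

noncomputable section

lemma aux_deriv {d : ℕ} (f : EuclideanSpace ℝ (Fin d) → ℝ) (f' : EuclideanSpace ℝ (Fin d) → EuclideanSpace ℝ (Fin d))
    (hgrad : ∀ y, HasGradientAt f (f' y) y) (y v : EuclideanSpace ℝ (Fin d)) (t : ℝ) :
    HasDerivAt (fun s : ℝ => f (y + s • v)) ⟪f' (y + t • v), v⟫ t := by
  have hc : HasDerivAt (fun s : ℝ => y + s • v) v t := by
    simpa using (hasDerivAt_id t).smul_const v |>.const_add y
  have := ((hgrad (y + t • v)).hasFDerivAt).comp_hasDerivAt t hc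
  simp [InnerProductSpace.toDual_apply_apply] at this; exact this

lemma aux_taylor {d : ℕ} (f : EuclideanSpace ℝ (Fin d) → ℝ)
    (f' : EuclideanSpace ℝ (Fin d) → EuclideanSpace ℝ (Fin d))
    (H0 H1 : ℝ) (xstar : EuclideanSpace ℝ (Fin d))
    (hgrad : ∀ y, HasGradientAt f (f' y) y)
    (hsmooth : ∀ y z : EuclideanSpace ℝ (Fin d),
      Real.sqrt H1 * ‖z - y‖ ≤ 1 →
      ‖f' z - f' y‖ ≤ (H0 + H1 * (f y - f xstar)) * ‖z - y‖)
    (y v : EuclideanSpace ℝ (Fin d)) (hv : Real.sqrt H1 * ‖v‖ ≤ 1) :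
    f (y + v) ≤ f y + ⟪f' y, v⟫ + (H0 + H1 * (f y - f xstar)) / 2 * ‖v‖ ^ 2 := by
  set L : ℝ := H0 + H1 * (f y - f xstar) with hL
  set A : ℝ := ⟪f' y, v⟫ with hA
  set ψ : ℝ → ℝ := fun t => f y + (A * t + L * ‖v‖ ^ 2 / 2 * t ^ 2) - f (y + t • v) with hψdef
  have hψ : ∀ t : ℝ, HasDerivAt ψ (A + L * ‖v‖ ^ 2 / 2 * (2 * t) - ⟪f' (y + t • v), v⟫) t := by
    intro t
    have h1 : HasDerivAt (fun s : ℝ => f y + (A * s + L * ‖v‖ ^ 2 / 2 * s ^ 2))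
        (A + L * ‖v‖ ^ 2 / 2 * (2 * t)) t := by
      have := (((hasDerivAt_id t).const_mul A).add ((hasDerivAt_pow 2 t).const_mul
        (L * ‖v‖ ^ 2 / 2))).const_add (f y)
      simpa [mul_comm, mul_assoc, mul_left_comm] using this
    exact h1.sub (aux_deriv f f' hgrad y v t)
  have hmono : MonotoneOn ψ (Set.Icc (0:ℝ) 1) := by
    apply monotoneOn_of_deriv_nonneg (convex_Icc 0 1)
    · exact fun t _ => ((hψ t).continuousAt).continuousWithinAt
    · exact fun t _ => ((hψ t).differentiableAt).differentiableWithinAt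
    · intro t ht
      rw [interior_Icc] at ht
      rw [(hψ t).deriv]
      have hs : Real.sqrt H1 * ‖(y + t • v) - y‖ ≤ 1 := by
        have : ‖(y + t • v) - y‖ = |t| * ‖v‖ := by
          simp [norm_smul]
        rw [this, abs_of_pos ht.1]
        nlinarith [Real.sqrt_nonneg H1, norm_nonneg v, ht.1, ht.2, mul_nonneg (Real.sqrt_nonneg H1) (norm_nonneg v)]
      have hb := hsmooth y (y + t • v) hs
      have hnorm : ‖(y + t • v) - y‖ = t * ‖v‖ := by
        have : ‖(y + t • v) - y‖ = |t| * ‖v‖ := by simp [norm_smul]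
        rw [this, abs_of_pos ht.1]
      rw [hnorm] at hb
      have hin : ⟪f' (y + t • v) - f' y, v⟫ ≤ L * (t * ‖v‖) * ‖v‖ :=
        le_trans (real_inner_le_norm _ _) (by
          exact mul_le_mul_of_nonneg_right hb (norm_nonneg v))
      rw [inner_sub_left] at hin
      have heq : L * (t * ‖v‖) * ‖v‖ = L * ‖v‖ ^ 2 / 2 * (2 * t) := by ring
      rw [heq] at hin
      have hA' : A = inner ℝ (f' y) v := hA
      linarith [hin]
  have h01 := hmono (Set.mem_Icc.2 ⟨le_refl 0, zero_le_one⟩) (Set.mem_Icc.2 ⟨zero_le_one, le_refl 1⟩) zero_le_one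
  have hψ0 : ψ 0 = 0 := by simp [hψdef]
  have hψ1 : ψ 1 = f y + (A + L * ‖v‖ ^ 2 / 2) - f (y + v) := by simp [hψdef]
  rw [hψ0, hψ1] at h01
  linarith

lemma aux_rec (F : ℕ → ℝ) (c : ℝ) (T N : ℕ) (hc : 0 ≤ c) (hnn : ∀ k, 0 ≤ F k)
    (hstep : ∀ k, T ≤ k → k < N → F (k + 1) ≤ F k - c * F k ^ 2) :
    ∀ j, T + j ≤ N → (j : ℝ) * c * F (T + j) ≤ 1 := by
  intro j
  induction j with
  | zero => intro _; simp
  | succ j ih =>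
    intro hj
    have h1 : (j : ℝ) * c * F (T + j) ≤ 1 := ih (by omega)
    have h2 : F (T + j + 1) ≤ F (T + j) - c * F (T + j) ^ 2 :=
      hstep (T + j) (by omega) (by omega)
    have hFj := hnn (T + j)
    have hF' := hnn (T + j + 1)
    have hcFj : c * F (T + j) ≤ 1 := by nlinarith
    have h3 : (j : ℝ) * c * F (T + j) * (1 - c * F (T + j)) ≤ 1 * (1 - c * F (T + j)) :=
      mul_le_mul_of_nonneg_right h1 (by linarith)
    have h4 : ((j : ℝ) + 1) * c * F (T + j + 1) ≤ ((j : ℝ) + 1) * c * (F (T + j) - c * F (T + j) ^ 2) := by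
      have : (0:ℝ) ≤ ((j : ℝ) + 1) * c := by positivity
      exact mul_le_mul_of_nonneg_left h2 this
    have : (T + (j + 1)) = (T + j + 1) := by omega
    rw [this]
    push_cast
    nlinarith [sq_nonneg (c * F (T + j))]

lemma aux_gradbound {d : ℕ} (f : EuclideanSpace ℝ (Fin d) → ℝ)
    (f' : EuclideanSpace ℝ (Fin d) → EuclideanSpace ℝ (Fin d))
    (H0 H1 : ℝ) (xstar : EuclideanSpace ℝ (Fin d))
    (hH0 : 0 < H0) (hH1 : 0 < H1)
    (hgrad : ∀ y, HasGradientAt f (f' y) y)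
    (hsmooth : ∀ y z : EuclideanSpace ℝ (Fin d),
      Real.sqrt H1 * ‖z - y‖ ≤ 1 →
      ‖f' z - f' y‖ ≤ (H0 + H1 * (f y - f xstar)) * ‖z - y‖)
    (hmin : ∀ y, f xstar ≤ f y)
    (y : EuclideanSpace ℝ (Fin d)) :
    Real.sqrt H1 * ‖f' y‖ ≤ 3 / 2 * (H0 + H1 * (f y - f xstar)) := by
  set L : ℝ := H0 + H1 * (f y - f xstar) with hL
  have hFnn : 0 ≤ f y - f xstar := sub_nonneg.2 (hmin y)
  have hLpos : 0 < L := by positivity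
  rcases eq_or_ne (f' y) 0 with h0 | h0
  · rw [h0]; simp; positivity
  · have hM : 0 < ‖f' y‖ := norm_pos_iff.2 h0
    have hs : 0 < Real.sqrt H1 := Real.sqrt_pos.2 hH1
    set v : EuclideanSpace ℝ (Fin d) := -((Real.sqrt H1 * ‖f' y‖)⁻¹) • f' y with hv
    have hvnorm : ‖v‖ = (Real.sqrt H1)⁻¹ := by
      rw [hv, norm_smul, norm_neg, norm_inv]
      rw [Real.norm_of_nonneg (by positivity)]
      field_simp
    have hvok : Real.sqrt H1 * ‖v‖ ≤ 1 := by
      rw [hvnorm]; rw [mul_inv_cancel₀ (ne_of_gt hs)]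
    have htay := aux_taylor f f' H0 H1 xstar hgrad hsmooth y v hvok
    have hinner : ⟪f' y, v⟫ = -(‖f' y‖ / Real.sqrt H1) := by
      rw [hv, inner_smul_right, real_inner_self_eq_norm_sq]
      rw [mul_inv, sq]
      field_simp
    have hvsq : ‖v‖ ^ 2 = 1 / H1 := by
      rw [hvnorm, ← Real.sqrt_inv, Real.sq_sqrt (by positivity)]
      simp
    rw [hinner, hvsq] at htay
    have hmin' := hmin (y + v)
    -- ‖f' y‖ / √H1 ≤ (f y - f xstar) + L / (2 * H1)
    have key : ‖f' y‖ / Real.sqrt H1 ≤ (f y - f xstar) + L / (2 * H1) := by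
      have : L / 2 * (1 / H1) = L / (2 * H1) := by ring
      linarith [htay, this ▸ htay]
    have hH1s : Real.sqrt H1 * Real.sqrt H1 = H1 := Real.mul_self_sqrt (le_of_lt hH1)
    -- multiply key by √H1
    have key2 : ‖f' y‖ ≤ Real.sqrt H1 * (f y - f xstar) + Real.sqrt H1 * (L / (2 * H1)) := by
      have := mul_le_mul_of_nonneg_left key (le_of_lt hs)
      calc ‖f' y‖ = Real.sqrt H1 * (‖f' y‖ / Real.sqrt H1) := by field_simp
        _ ≤ _ := by linarith [this]
    have key3 : Real.sqrt H1 * ‖f' y‖ ≤ H1 * (f y - f xstar) + L / 2 := by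
      have := mul_le_mul_of_nonneg_left key2 (le_of_lt hs)
      have e1 : Real.sqrt H1 * (Real.sqrt H1 * (f y - f xstar)) = H1 * (f y - f xstar) := by
        rw [← mul_assoc, hH1s]
      have e2 : Real.sqrt H1 * (Real.sqrt H1 * (L / (2 * H1))) = L / 2 := by
        rw [← mul_assoc, hH1s]; field_simp
      rw [mul_add, e1, e2] at this
      linarith [this]
    have : H1 * (f y - f xstar) ≤ L := by rw [hL]; linarith
    linarith

set_option maxHeartbeats 1000000 in
/-- Convex rate for GD with warm-up step size on a convex
`(H0,H1)`-smooth function (`H0, H1 > 0`) attaining its minimum `f*` at `x*`,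
with `θ = 1/(4√2 + 4)` and `η_k = θ / max{H0, 3H1 F_k}` (encoding
`θ·min{1/H0, 1/(3H1 F_k)}` with the convention `η_k = θ/H0` for `F_k = 0`).
`T` is the smallest index `k ∈ {0,…,N-1}` with `F_k < H0/(3H1)`, and `T = N`
if no such index exists; `R = ‖x^0 - x*‖`. -/
theorem gd_warmup_convex_rate
    {d : ℕ}
    (f : EuclideanSpace ℝ (Fin d) → ℝ)
    (f' : EuclideanSpace ℝ (Fin d) → EuclideanSpace ℝ (Fin d))
    (H0 H1 θ : ℝ) (N T : ℕ)
    (xstar : EuclideanSpace ℝ (Fin d))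
    (x : ℕ → EuclideanSpace ℝ (Fin d))
    (hH0 : 0 < H0) (hH1 : 0 < H1)
    (hθ : θ = 1 / (4 * Real.sqrt 2 + 4))
    (hgrad : ∀ y, HasGradientAt f (f' y) y)
    (hsmooth : ∀ y z : EuclideanSpace ℝ (Fin d),
      Real.sqrt H1 * ‖z - y‖ ≤ 1 →
      ‖f' z - f' y‖ ≤ (H0 + H1 * (f y - f xstar)) * ‖z - y‖)
    -- convexity
    (hconvex : ∀ y z : EuclideanSpace ℝ (Fin d), f y - f z ≤ ⟪f' y, y - z⟫)
    -- `f` attains its minimum `f*` at `xstar`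
    (hmin : ∀ y, f xstar ≤ f y)
    -- GD with warm-up step size
    (hupdate : ∀ k, x (k + 1) =
      x k - (θ / max H0 (3 * H1 * (f (x k) - f xstar))) • f' (x k))
    (hN : 0 < N)
    -- `T` is the smallest index `k < N` with `F_k < H0/(3H1)`, else `T = N`
    (hTle : T ≤ N)
    (hTbefore : ∀ k < T, H0 / (3 * H1) ≤ f (x k) - f xstar)
    (hTat : T < N → f (x T) - f xstar < H0 / (3 * H1)) :
    (T < N → f (x N) - f xstar ≤
      min ((1 - θ / (6 * H1 * ‖x 0 - xstar‖ ^ 2)) ^ T * (f (x 0) - f xstar))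
          (2 * H0 * ‖x 0 - xstar‖ ^ 2 / (θ * ((N : ℝ) - T)))) ∧
    (T = N → f (x N) - f xstar ≤
      (1 - θ / (6 * H1 * ‖x 0 - xstar‖ ^ 2)) ^ N * (f (x 0) - f xstar)) := by
  have hsqrt2 : (1:ℝ) ≤ Real.sqrt 2 := by
    rw [show (1:ℝ) = Real.sqrt 1 by simp]
    exact Real.sqrt_le_sqrt (by norm_num)
  have hθpos : 0 < θ := by
    rw [hθ]; positivity
  have hθ8 : θ ≤ 1 / 8 := by
    rw [hθ, div_le_div_iff₀ (by positivity) (by norm_num)]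
    nlinarith
  have hFnn : ∀ k, 0 ≤ f (x k) - f xstar := fun k => sub_nonneg.2 (hmin _)
  have hmub : ∀ k, H0 ≤ max H0 (3 * H1 * (f (x k) - f xstar)) := fun k => le_max_left _ _
  have hm2 : ∀ k, 3 * H1 * (f (x k) - f xstar) ≤ max H0 (3 * H1 * (f (x k) - f xstar)) :=
    fun k => le_max_right _ _
  have hmpos : ∀ k, 0 < max H0 (3 * H1 * (f (x k) - f xstar)) :=
    fun k => lt_of_lt_of_le hH0 (hmub k)
  set η : ℕ → ℝ := fun k => θ / max H0 (3 * H1 * (f (x k) - f xstar)) with hηdef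
  have hηk : ∀ k, η k = θ / max H0 (3 * H1 * (f (x k) - f xstar)) := fun k => rfl
  have hηpos : ∀ k, 0 < η k := fun k => div_pos hθpos (hmpos k)
  have hLpos : ∀ k, 0 < H0 + H1 * (f (x k) - f xstar) := by
    intro k; have := hFnn k; nlinarith
  have hηL : ∀ k, η k * (H0 + H1 * (f (x k) - f xstar)) ≤ 4 * θ / 3 := by
    intro k
    have hLle : H0 + H1 * (f (x k) - f xstar) ≤
        4 / 3 * max H0 (3 * H1 * (f (x k) - f xstar)) := by
      have h1 := hmub k; have h2 := hm2 k; linarith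
    rw [hηk, div_mul_eq_mul_div, div_le_iff₀ (hmpos k)]
    calc θ * (H0 + H1 * (f (x k) - f xstar))
        ≤ θ * (4 / 3 * max H0 (3 * H1 * (f (x k) - f xstar))) :=
          mul_le_mul_of_nonneg_left hLle hθpos.le
      _ = 4 * θ / 3 * max H0 (3 * H1 * (f (x k) - f xstar)) := by ring
  have hgb : ∀ k, Real.sqrt H1 * ‖f' (x k)‖ ≤ 3 / 2 * (H0 + H1 * (f (x k) - f xstar)) :=
    fun k => aux_gradbound f f' H0 H1 xstar hH0 hH1 hgrad hsmooth hmin (x k)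
  -- descent inequality
  have hdescent : ∀ k, f (x (k + 1)) - f xstar ≤
      (f (x k) - f xstar) - η k / 2 * ‖f' (x k)‖ ^ 2 := by
    intro k
    have hx : x (k + 1) = x k + (-(η k)) • f' (x k) := by
      rw [hupdate k, ← hηk k, neg_smul, ← sub_eq_add_neg]
    have hvnorm : ‖(-(η k)) • f' (x k)‖ = η k * ‖f' (x k)‖ := by
      rw [norm_smul, Real.norm_eq_abs, abs_neg, abs_of_pos (hηpos k)]
    have hvok : Real.sqrt H1 * ‖(-(η k)) • f' (x k)‖ ≤ 1 := by
      rw [hvnorm]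
      have h1 := mul_le_mul_of_nonneg_left (hgb k) (hηpos k).le
      have h2 := hηL k
      nlinarith [Real.sqrt_nonneg H1, norm_nonneg (f' (x k))]
    have htay := aux_taylor f f' H0 H1 xstar hgrad hsmooth (x k) ((-(η k)) • f' (x k)) hvok
    rw [← hx] at htay
    have hinner : ⟪f' (x k), (-(η k)) • f' (x k)⟫ = -(η k) * ‖f' (x k)‖ ^ 2 := by
      rw [inner_smul_right, real_inner_self_eq_norm_sq]
    have hvsq : ‖(-(η k)) • f' (x k)‖ ^ 2 = η k ^ 2 * ‖f' (x k)‖ ^ 2 := by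
      rw [hvnorm, mul_pow]
    rw [hinner, hvsq] at htay
    have hprod := mul_le_mul_of_nonneg_right (hηL k)
      (show (0:ℝ) ≤ η k * ‖f' (x k)‖ ^ 2 by positivity)
    nlinarith [hθ8, hηpos k, sq_nonneg ‖f' (x k)‖, mul_pos (hηpos k) (hηpos k)]
  have hhalf : ∀ k, η k / 2 * ‖f' (x k)‖ ^ 2 ≤ f (x k) - f xstar := by
    intro k; linarith [hdescent k, hFnn (k + 1)]
  have hmono : ∀ k, f (x (k + 1)) - f xstar ≤ f (x k) - f xstar := by
    intro k
    have := hdescent k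
    nlinarith [hηpos k, sq_nonneg ‖f' (x k)‖]
  have hmono' : ∀ j k, j ≤ k → f (x k) - f xstar ≤ f (x j) - f xstar := by
    intro j k hjk
    induction hjk with
    | refl => exact le_rfl
    | @step m h ih => exact le_trans (hmono m) ih
  -- distances are nonincreasing
  have hdist : ∀ k, ‖x (k + 1) - xstar‖ ^ 2 ≤ ‖x k - xstar‖ ^ 2 := by
    intro k
    have hx : x (k + 1) - xstar = (x k - xstar) - η k • f' (x k) := by
      rw [hupdate k, ← hηk k]; abel
    rw [hx, norm_sub_sq_real]
    have hsm : ⟪x k - xstar, η k • f' (x k)⟫ = η k * ⟪x k - xstar, f' (x k)⟫ :=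
      real_inner_smul_right _ _ _
    have hcv : f (x k) - f xstar ≤ ⟪x k - xstar, f' (x k)⟫ := by
      rw [real_inner_comm]; exact hconvex (x k) xstar
    have hnsm : ‖η k • f' (x k)‖ ^ 2 = η k ^ 2 * ‖f' (x k)‖ ^ 2 := by
      rw [norm_smul, Real.norm_eq_abs, abs_of_pos (hηpos k), mul_pow]
    rw [hsm, hnsm]
    have h1 := mul_le_mul_of_nonneg_left hcv (by positivity : (0:ℝ) ≤ 2 * η k)
    have h2 := mul_le_mul_of_nonneg_left (hhalf k) (by positivity : (0:ℝ) ≤ 2 * η k)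
    nlinarith [hFnn k, hηpos k]
  have hRle : ∀ k, ‖x k - xstar‖ ^ 2 ≤ ‖x 0 - xstar‖ ^ 2 := by
    intro k
    induction k with
    | zero => exact le_rfl
    | succ k ih => exact le_trans (hdist k) ih
  have hFgR : ∀ k, f (x k) - f xstar ≤ ‖f' (x k)‖ * ‖x 0 - xstar‖ := by
    intro k
    have h1 : f (x k) - f xstar ≤ ⟪f' (x k), x k - xstar⟫ := hconvex (x k) xstar
    have h2 := real_inner_le_norm (f' (x k)) (x k - xstar)
    have h3 : ‖x k - xstar‖ ≤ ‖x 0 - xstar‖ := by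
      nlinarith [hRle k, norm_nonneg (x k - xstar), norm_nonneg (x 0 - xstar)]
    have h4 := mul_le_mul_of_nonneg_left h3 (norm_nonneg (f' (x k)))
    linarith
  rcases eq_or_lt_of_le (norm_nonneg (x 0 - xstar)) with hR0 | hRpos
  · -- degenerate case: x 0 = xstar
    have hR0' : ‖x 0 - xstar‖ = 0 := hR0.symm
    have hx0 : x 0 = xstar := by rwa [norm_eq_zero, sub_eq_zero] at hR0'
    have hF0 : f (x 0) - f xstar = 0 := by rw [hx0]; ring
    have hFN : f (x N) - f xstar ≤ 0 := by
      have := hmono' 0 N (Nat.zero_le N); rw [hF0] at this; exact this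
    constructor
    · intro _
      apply le_min
      · rw [hF0, mul_zero]; exact hFN
      · have hz : 2 * H0 * ‖x 0 - xstar‖ ^ 2 / (θ * ((N : ℝ) - T)) = 0 := by
          rw [hR0']; simp
        rw [hz]; exact hFN
    · intro _
      rw [hF0, mul_zero]; exact hFN
  · -- main case: R > 0
    have hphase1 : ∀ k < T, f (x (k + 1)) - f xstar ≤
        (1 - θ / (6 * H1 * ‖x 0 - xstar‖ ^ 2)) * (f (x k) - f xstar) := by
      intro k hk
      have hFk := hTbefore k hk
      have hFkpos : 0 < f (x k) - f xstar := lt_of_lt_of_le (by positivity) hFk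
      have hmax : max H0 (3 * H1 * (f (x k) - f xstar)) = 3 * H1 * (f (x k) - f xstar) :=
        max_eq_right (by rw [div_le_iff₀ (by positivity)] at hFk; linarith)
      have hηk' : η k = θ / (3 * H1 * (f (x k) - f xstar)) := by rw [hηk, hmax]
      have hgR : (f (x k) - f xstar) / ‖x 0 - xstar‖ ≤ ‖f' (x k)‖ := by
        rw [div_le_iff₀ hRpos]; exact hFgR k
      have hg2 : ((f (x k) - f xstar) / ‖x 0 - xstar‖) ^ 2 ≤ ‖f' (x k)‖ ^ 2 :=
        pow_le_pow_left₀ (div_nonneg (hFnn k) (norm_nonneg _)) hgR 2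
      have hkey : θ / (6 * H1 * ‖x 0 - xstar‖ ^ 2) * (f (x k) - f xstar) =
          θ / (3 * H1 * (f (x k) - f xstar)) / 2 *
            ((f (x k) - f xstar) / ‖x 0 - xstar‖) ^ 2 := by
        field_simp
        ring
      have h5 := mul_le_mul_of_nonneg_left hg2
        (show (0:ℝ) ≤ θ / (3 * H1 * (f (x k) - f xstar)) / 2 by positivity)
      have hd := hdescent k
      rw [hηk'] at hd
      linarith [hkey, h5, hd]
    have h1c : 0 < T → 0 ≤ 1 - θ / (6 * H1 * ‖x 0 - xstar‖ ^ 2) := by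
      intro h0T
      have hp := hphase1 0 h0T
      have hF0pos : 0 < f (x 0) - f xstar :=
        lt_of_lt_of_le (by positivity) (hTbefore 0 h0T)
      nlinarith [hFnn 1]
    have hpow : ∀ k, k ≤ T → f (x k) - f xstar ≤
        (1 - θ / (6 * H1 * ‖x 0 - xstar‖ ^ 2)) ^ k * (f (x 0) - f xstar) := by
      intro k
      induction k with
      | zero => intro _; simp
      | succ k ih =>
        intro hk
        have h1 := hphase1 k (by omega)
        have h2 := ih (by omega)
        have hnn := h1c (by omega)
        calc f (x (k + 1)) - f xstar
            ≤ (1 - θ / (6 * H1 * ‖x 0 - xstar‖ ^ 2)) * (f (x k) - f xstar) := h1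
          _ ≤ (1 - θ / (6 * H1 * ‖x 0 - xstar‖ ^ 2)) *
              ((1 - θ / (6 * H1 * ‖x 0 - xstar‖ ^ 2)) ^ k * (f (x 0) - f xstar)) :=
            mul_le_mul_of_nonneg_left h2 hnn
          _ = (1 - θ / (6 * H1 * ‖x 0 - xstar‖ ^ 2)) ^ (k + 1) * (f (x 0) - f xstar) := by
            ring
    constructor
    · intro hTN
      apply le_min
      · exact le_trans (hmono' T N hTle) (hpow T le_rfl)
      · have hFT := hTat hTN
        have hphase2 : ∀ k, T ≤ k → k < N → f (x (k + 1)) - f xstar ≤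
            (f (x k) - f xstar) -
              θ / (2 * H0 * ‖x 0 - xstar‖ ^ 2) * (f (x k) - f xstar) ^ 2 := by
          intro k hTk hkN
          have hFk : f (x k) - f xstar < H0 / (3 * H1) :=
            lt_of_le_of_lt (hmono' T k hTk) hFT
          have hmax : max H0 (3 * H1 * (f (x k) - f xstar)) = H0 :=
            max_eq_left (by rw [lt_div_iff₀ (by positivity)] at hFk; linarith)
          have hηk' : η k = θ / H0 := by rw [hηk, hmax]
          have hgR : (f (x k) - f xstar) / ‖x 0 - xstar‖ ≤ ‖f' (x k)‖ := by
            rw [div_le_iff₀ hRpos]; exact hFgR k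
          have hg2 : ((f (x k) - f xstar) / ‖x 0 - xstar‖) ^ 2 ≤ ‖f' (x k)‖ ^ 2 :=
            pow_le_pow_left₀ (div_nonneg (hFnn k) (norm_nonneg _)) hgR 2
          have hkey : θ / (2 * H0 * ‖x 0 - xstar‖ ^ 2) * (f (x k) - f xstar) ^ 2 =
              θ / H0 / 2 * ((f (x k) - f xstar) / ‖x 0 - xstar‖) ^ 2 := by
            have h2 : H0 ≠ 0 := hH0.ne'
            have h3 : ‖x 0 - xstar‖ ≠ 0 := hRpos.ne'
            field_simp
          have h5 := mul_le_mul_of_nonneg_left hg2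
            (show (0:ℝ) ≤ θ / H0 / 2 by positivity)
          have hd := hdescent k
          rw [hηk'] at hd
          linarith [hkey, h5, hd]
        have haux : ((N - T : ℕ) : ℝ) * (θ / (2 * H0 * ‖x 0 - xstar‖ ^ 2)) *
            (f (x (T + (N - T))) - f xstar) ≤ 1 :=
          aux_rec (fun k => f (x k) - f xstar) (θ / (2 * H0 * ‖x 0 - xstar‖ ^ 2)) T N
            (by positivity) hFnn hphase2 (N - T) (by omega)
        have hTN'' : T + (N - T) = N := by omega
        rw [hTN''] at haux
        have hcast : ((N - T : ℕ) : ℝ) = (N : ℝ) - T := by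
          rw [Nat.cast_sub hTle]
        rw [hcast] at haux
        have hNTpos : (0:ℝ) < (N : ℝ) - T := by
          have : (T:ℝ) < N := by exact_mod_cast hTN
          linarith
        rw [le_div_iff₀ (mul_pos hθpos hNTpos)]
        have hmul := mul_le_mul_of_nonneg_right haux
          (show (0:ℝ) ≤ 2 * H0 * ‖x 0 - xstar‖ ^ 2 by positivity)
        have heq : ((N : ℝ) - T) * (θ / (2 * H0 * ‖x 0 - xstar‖ ^ 2)) *
            (f (x N) - f xstar) * (2 * H0 * ‖x 0 - xstar‖ ^ 2) =
            (f (x N) - f xstar) * (θ * ((N : ℝ) - T)) := by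
          field_simp
        rw [heq] at hmul
        linarith
    · intro hTN
      exact hpow N (le_of_eq hTN.symm)

end
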